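/- Let f : ℤ → ℕ ∪ {∞} be a function such that f⁻¹(0) is a finite set, and let d₀ be a positive integer such that f(n) ≥ 1 for all integers n with |n| ≥ d₀. Let U = {u_k}_{k=1}^∞ be a sequence of integers such that f(n) = card{k ≥ 1 : u_k = n} for every integer n. Let A be a finite set of integers with r_A(n) ≤ f(n) for all integers n, with 0 ∉ A, and such that for some positive integer m, r_A(n) ≥ card{i ≤ m : u_i = n} for all integers n. Then there exists a finite set of integers B such that A ⊆ B, 0 ∉ B, r_B(n) ≤ f(n) for all integers n, and r_B(n) ≥ card{i ≤ m+1 : u_i = n} for all integers n. -/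

import Mathlib

/-- The representation function of a set `A` of integers:
`r_A(n) = card {(a,b) : a, b ∈ A, a ≤ b, a + b = n}`, valued in `ℕ∞`. -/
noncomputable def repFn (A : Set ℤ) (n : ℤ) : ℕ∞ :=
  {p : ℤ × ℤ | p.1 ∈ A ∧ p.2 ∈ A ∧ p.1 ≤ p.2 ∧ p.1 + p.2 = n}.encard

/-- The counting function of a set `A` of integers:
`A(y, x) = card {a ∈ A : y ≤ a ≤ x}`. -/
noncomputable def countFn (A : Set ℤ) (y x : ℝ) : ℕ :=
  {a : ℤ | a ∈ A ∧ y ≤ (a : ℝ) ∧ (a : ℝ) ≤ x}.ncard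

lemma repFn_mono {A B : Set ℤ} (h : A ⊆ B) (n : ℤ) : repFn A n ≤ repFn B n := by
  apply Set.encard_mono
  rintro ⟨p1, p2⟩ ⟨h1, h2, h3, h4⟩
  exact ⟨h h1, h h2, h3, h4⟩

lemma repFn_ne_top {A : Set ℤ} (hA : A.Finite) (n : ℤ) : repFn A n ≠ ⊤ := by
  have : {p : ℤ × ℤ | p.1 ∈ A ∧ p.2 ∈ A ∧ p.1 ≤ p.2 ∧ p.1 + p.2 = n} ⊆ A ×ˢ A := by
    rintro ⟨p1, p2⟩ ⟨h1, h2, _, _⟩; exact ⟨h1, h2⟩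
  exact (((hA.prod hA).subset this).encard_lt_top).ne

theorem stmt_1 (f : ℤ → ℕ∞) (hf : {n : ℤ | f n = 0}.Finite)
    (d₀ : ℕ) (hd₀ : 0 < d₀) (hd : ∀ n : ℤ, (d₀ : ℤ) ≤ |n| → 1 ≤ f n)
    (u : ℕ → ℤ) (hu : ∀ n : ℤ, f n = {k : ℕ | 1 ≤ k ∧ u k = n}.encard)
    (A : Set ℤ) (hA : A.Finite) (hA0 : (0 : ℤ) ∉ A)
    (hAf : ∀ n : ℤ, repFn A n ≤ f n)
    (m : ℕ) (hm : 0 < m)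
    (hAm : ∀ n : ℤ, {i : ℕ | 1 ≤ i ∧ i ≤ m ∧ u i = n}.encard ≤ repFn A n) :
    ∃ B : Set ℤ, B.Finite ∧ A ⊆ B ∧ (0 : ℤ) ∉ B ∧
      (∀ n : ℤ, repFn B n ≤ f n) ∧
      (∀ n : ℤ, {i : ℕ | 1 ≤ i ∧ i ≤ m + 1 ∧ u i = n}.encard ≤ repFn B n) := by
  classical
  set n₀ := u (m + 1) with hn₀def
  -- For n ≠ n₀, the counting set at level m+1 equals that at level m.
  have hcount_ne : ∀ n : ℤ, n ≠ n₀ →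
      {i : ℕ | 1 ≤ i ∧ i ≤ m + 1 ∧ u i = n} ⊆ {i : ℕ | 1 ≤ i ∧ i ≤ m ∧ u i = n} := by
    intro n hn i ⟨h1, h2, h3⟩
    refine ⟨h1, ?_, h3⟩
    rcases Nat.lt_or_ge i (m + 1) with h | h
    · omega
    · exfalso; apply hn; rw [← h3]; congr 1; omega
  -- counting sets are bounded by f
  have hcount_le_f : ∀ n : ℤ,
      {i : ℕ | 1 ≤ i ∧ i ≤ m + 1 ∧ u i = n}.encard ≤ f n := by
    intro n
    rw [hu n]
    exact Set.encard_mono (fun i ⟨h1, _, h3⟩ => ⟨h1, h3⟩)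
  by_cases hcase : {i : ℕ | 1 ≤ i ∧ i ≤ m + 1 ∧ u i = n₀}.encard ≤ repFn A n₀
  · refine ⟨A, hA, subset_rfl, hA0, hAf, fun n => ?_⟩
    by_cases hn : n = n₀
    · rw [hn]; exact hcase
    · exact le_trans (Set.encard_mono (hcount_ne n hn)) (hAm n)
  push_neg at hcase
  -- bound M
  obtain ⟨M, hMA, hMn₀, hMd, hM1⟩ :
      ∃ M : ℤ, (∀ a ∈ A, -M ≤ a ∧ a ≤ M) ∧ (-M ≤ n₀ ∧ n₀ ≤ M) ∧ (d₀ : ℤ) ≤ M ∧ 1 ≤ M := by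
    obtain ⟨M₁, hM₁⟩ := ((hA.image (fun a => |a|)).bddAbove)
    refine ⟨max M₁ (max |n₀| (d₀ : ℤ)), ?_, ?_, ?_, ?_⟩
    · intro a ha
      have : |a| ≤ M₁ := hM₁ ⟨a, ha, rfl⟩
      have h2 := abs_le.mp this
      constructor <;>
        [exact le_trans (by simpa using neg_le_neg (le_max_left M₁ _)) h2.1;
         exact le_trans h2.2 (le_max_left _ _)]
    · have h := abs_le.mp (le_refl |n₀|)
      constructor
      · have : |n₀| ≤ max M₁ (max |n₀| (d₀ : ℤ)) :=
          le_trans (le_max_left _ _) (le_max_right _ _)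
        omega
      · have : n₀ ≤ |n₀| := le_abs_self n₀
        have h2 : |n₀| ≤ max M₁ (max |n₀| (d₀ : ℤ)) :=
          le_trans (le_max_left _ _) (le_max_right _ _)
        omega
    · exact le_trans (le_max_right _ _) (le_max_right _ _)
    · have : (d₀ : ℤ) ≤ max M₁ (max |n₀| (d₀ : ℤ)) :=
        le_trans (le_max_right _ _) (le_max_right _ _)
      have : (1 : ℤ) ≤ (d₀ : ℤ) := by exact_mod_cast hd₀
      omega
  set c : ℤ := 5 * M + 5 with hc
  set b₁ : ℤ := -c with hb₁
  set b₂ : ℤ := n₀ + c with hb₂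
  set B : Set ℤ := insert b₁ (insert b₂ A) with hB
  have hAB : A ⊆ B := fun a ha => Set.mem_insert_iff.mpr (Or.inr (Set.mem_insert_iff.mpr (Or.inr ha)))
  have hb₁A : b₁ ∉ A := fun h => by have := hMA b₁ h; omega
  have hb₂A : b₂ ∉ A := fun h => by have := hMA b₂ h; omega
  -- classification of elements of B
  have hclass : ∀ x ∈ B, x = b₁ ∨ x = b₂ ∨ (-M ≤ x ∧ x ≤ M) := by
    intro x hx
    rcases hx with h | h | h
    · exact Or.inl h
    · exact Or.inr (Or.inl h)
    · exact Or.inr (Or.inr (hMA x h))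
  -- key equality: repFn B n₀ = repFn A n₀ + 1
  have hkeyset : {p : ℤ × ℤ | p.1 ∈ B ∧ p.2 ∈ B ∧ p.1 ≤ p.2 ∧ p.1 + p.2 = n₀} =
      insert (b₁, b₂) {p : ℤ × ℤ | p.1 ∈ A ∧ p.2 ∈ A ∧ p.1 ≤ p.2 ∧ p.1 + p.2 = n₀} := by
    ext ⟨p1, p2⟩
    simp only [Set.mem_setOf_eq, Set.mem_insert_iff, Prod.mk.injEq]
    constructor
    · rintro ⟨h1, h2, hle, hsum⟩
      have h1' : p1 ∈ B := h1
      have h2' : p2 ∈ B := h2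
      have hle' : p1 ≤ p2 := hle
      have hsum' : p1 + p2 = n₀ := hsum
      rcases h1' with g1 | g1 | g1 <;> rcases h2' with g2 | g2 | g2
      all_goals try (left; constructor <;> omega)
      all_goals try (have := hMA _ g1)
      all_goals try (have := hMA _ g2)
      all_goals try (left; constructor <;> omega)
      all_goals try (exfalso; omega)
      exact Or.inr ⟨g1, g2, hle', hsum'⟩
    · rintro (⟨e1, e2⟩ | ⟨h1, h2, hle, hsum⟩)
      · subst e1; subst e2
        exact ⟨Set.mem_insert _ _, Set.mem_insert_iff.mpr (Or.inr (Set.mem_insert _ _)),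
          by omega, by omega⟩
      · exact ⟨hAB h1, hAB h2, hle, hsum⟩
  have hkey : repFn B n₀ = repFn A n₀ + 1 := by
    unfold repFn
    rw [hkeyset, Set.encard_insert_of_notMem (by
      rintro ⟨h1, _, _, _⟩; exact hb₁A h1)]
  have hrA_ne_top : repFn A n₀ ≠ ⊤ := repFn_ne_top hA n₀
  have hstep : repFn A n₀ + 1 ≤ {i : ℕ | 1 ≤ i ∧ i ≤ m + 1 ∧ u i = n₀}.encard :=
    (ENat.add_one_le_iff hrA_ne_top).mpr hcase
  refine ⟨B, (hA.insert b₂).insert b₁, hAB, ?_, ?_, ?_⟩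
  · -- 0 ∉ B
    rintro (h | h | h)
    · omega
    · omega
    · exact hA0 h
  · -- upper bound
    intro n
    by_cases hn : n = n₀
    · rw [hn, hkey]
      exact le_trans hstep (hcount_le_f n₀)
    · by_cases hPB : {p : ℤ × ℤ | p.1 ∈ B ∧ p.2 ∈ B ∧ p.1 ≤ p.2 ∧ p.1 + p.2 = n} ⊆
          {p : ℤ × ℤ | p.1 ∈ A ∧ p.2 ∈ A ∧ p.1 ≤ p.2 ∧ p.1 + p.2 = n}
      · exact le_trans (Set.encard_mono hPB) (hAf n)
      · rw [Set.not_subset] at hPB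
        obtain ⟨⟨p1, p2⟩, ⟨h1, h2, hle, hsum⟩, hnot⟩ := hPB
        simp only [Set.mem_setOf_eq] at hnot
        have h1' : p1 ∈ B := h1
        have h2' : p2 ∈ B := h2
        have hle' : p1 ≤ p2 := hle
        have hsum' : p1 + p2 = n := hsum
        have hnew : (p1 = b₁ ∨ p1 = b₂) ∨ (p2 = b₁ ∨ p2 = b₂) := by
          by_contra hcon
          push_neg at hcon
          rcases h1' with g1 | g1 | g1
          · exact hcon.1.1 g1
          · exact hcon.1.2 g1
          · rcases h2' with g2 | g2 | g2
            · exact hcon.2.1 g2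
            · exact hcon.2.2 g2
            · exact hnot ⟨g1, g2, hle', hsum'⟩
        have c1 := hclass p1 h1'
        have c2 := hclass p2 h2'
        have hbig : n < -(2 * M) ∨ 2 * M < n := by omega
        -- every pair summing to n in B is the same
        have hsub : {p : ℤ × ℤ | p.1 ∈ B ∧ p.2 ∈ B ∧ p.1 ≤ p.2 ∧ p.1 + p.2 = n}.encard ≤ 1 := by
          rw [Set.encard_le_one_iff]
          rintro ⟨q1, q2⟩ ⟨r1, r2⟩ ⟨hq1, hq2, hqle, hqsum⟩ ⟨hr1, hr2, hrle, hrsum⟩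
          have d1 := hclass q1 hq1
          have d2 := hclass q2 hq2
          have d3 := hclass r1 hr1
          have d4 := hclass r2 hr2
          have hqle' : q1 ≤ q2 := hqle
          have hqsum' : q1 + q2 = n := hqsum
          have hrle' : r1 ≤ r2 := hrle
          have hrsum' : r1 + r2 = n := hrsum
          have : q1 = r1 ∧ q2 = r2 := by omega
          simp [this.1, this.2]
        refine le_trans hsub (hd n ?_)
        rcases hbig with h | h
        · rw [abs_of_nonpos (by omega)]; omega
        · rw [abs_of_nonneg (by omega)]; omega
  · -- lower bound
    intro n
    by_cases hn : n = n₀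
    · rw [hn, hkey]
      have h1 : {i : ℕ | 1 ≤ i ∧ i ≤ m + 1 ∧ u i = n₀} ⊆
          {i : ℕ | 1 ≤ i ∧ i ≤ m ∧ u i = n₀} ∪ {m + 1} := by
        intro i ⟨g1, g2, g3⟩
        rcases Nat.lt_or_ge i (m + 1) with h | h
        · exact Or.inl ⟨g1, by omega, g3⟩
        · exact Or.inr (by simp; omega)
      calc {i : ℕ | 1 ≤ i ∧ i ≤ m + 1 ∧ u i = n₀}.encard
          ≤ ({i : ℕ | 1 ≤ i ∧ i ≤ m ∧ u i = n₀} ∪ {m + 1}).encard := Set.encard_mono h1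
        _ ≤ {i : ℕ | 1 ≤ i ∧ i ≤ m ∧ u i = n₀}.encard + 1 := by
            simpa using Set.encard_union_le {i : ℕ | 1 ≤ i ∧ i ≤ m ∧ u i = n₀} {m + 1}
        _ ≤ repFn A n₀ + 1 := by
            exact add_le_add_left (hAm n₀) 1
    · exact le_trans (Set.encard_mono (hcount_ne n hn))
        (le_trans (hAm n) (repFn_mono hAB n))
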